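/- (Theorem 2 of the paper; dynamic program for partially observed mean-field sharing.) Let M, Y, N be finite types, Γ a finite nonempty type of prescriptions, T ∈ ℕ. Let μ_1 be a PMF on M (law of Z_1), K_t : M → Γ → PMF M transition kernels, c_t : M → Γ → ℝ per-step costs, h_t : M → N → Y observation functions, ν_t PMFs on N. The process: Z_1 ~ μ_1; at each t the controller observes Y_t = h_t(Z_t, N_t) with N_t ~ ν_t independent of everything else, chooses Γ_t = ψ_t(Y_{1:t}) ∈ Γ, and Z_{t+1} ~ K_t(Z_t, Γ_t). For a belief π ∈ PMF M and γ ∈ Γ define c̃_t(π, γ) := ∑_z π(z) c_t(z, γ), the predicted observation probability P_t(y | π, γ) := ∑_{z'} (∑_z π(z) K_t(z, γ)(z')) · ∑_{n : h_{t+1}(z', n) = y} ν_{t+1}(n), and the Bayes update φ_t(π, γ, y) ∈ PMF M by φ_t(π, γ, y)(z') = (∑_{n : h_{t+1}(z', n) = y} ν_{t+1}(n)) · (∑_z π(z) K_t(z, γ)(z')) / P_t(y | π, γ) whenever P_t(y | π, γ) > 0. Define V_{T+1} ≡ 0 on PMF M and, for t = T,…,1, V_t(π) := min_{γ ∈ Γ}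 [c̃_t(π, γ) + ∑_{y : P_t(y | π, γ) > 0} P_t(y | π, γ) · V_{t+1}(φ_t(π, γ, y))]. Then: (i) for every strategy ψ with ψ_t : Y^t → Γ, the expected total cost E[∑_{t=1}^T c_t(Z_t, Γ_t)] is at least E[V_1(Π_1)], where Π_1 is the posterior belief on Z_1 given Y_1; and (ii) any strategy choosing, at each t, a γ attaining the minimum at the current belief Π_t achieves this lower bound. Hence there is no loss of optimality in strategies of the form Γ_t = ψ_t(Π_t). -/

import Mathlib

open scoped ENNReal

variable {M Y N G : Type*} [Fintype M] [DecidableEq M] [Fintype Y] [DecidableEq Y]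
  [Fintype N] [Fintype G] [Nonempty G]

/-- Observation kernel: probability of observing `y` when the mean field is `z`,
under observation function `h t` and noise `ν t`. -/
noncomputable def obsP (h : ℕ → M → N → Y) (ν : ℕ → PMF N) (t : ℕ) (y : Y) (z : M) : ℝ≥0∞ :=
  ∑ nn ∈ Finset.univ.filter (fun nn => h t z nn = y), ν t nn

/-- Expected per-step cost under belief `π` and prescription `γ`. -/
noncomputable def ctil (c : ℕ → M → G → ℝ) (t : ℕ) (π : M → ℝ≥0∞) (γ : G) : ℝ :=
  ∑ z : M, (π z).toReal * c t z γ

/-- Unnormalized predicted next-state distribution. -/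
noncomputable def pred (K : ℕ → M → G → PMF M) (t : ℕ) (π : M → ℝ≥0∞) (γ : G) (z' : M) :
    ℝ≥0∞ :=
  ∑ z : M, π z * K t z γ z'

/-- Predicted probability of the next observation `y` under belief `π` and prescription `γ`. -/
noncomputable def Pobs (K : ℕ → M → G → PMF M) (h : ℕ → M → N → Y) (ν : ℕ → PMF N)
    (t : ℕ) (π : M → ℝ≥0∞) (γ : G) (y : Y) : ℝ≥0∞ :=
  ∑ z' : M, pred K t π γ z' * obsP h ν (t + 1) y z'

/-- Bayes belief update `φ_t(π, γ, y)`. -/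
noncomputable def bayes (K : ℕ → M → G → PMF M) (h : ℕ → M → N → Y) (ν : ℕ → PMF N)
    (t : ℕ) (π : M → ℝ≥0∞) (γ : G) (y : Y) : M → ℝ≥0∞ :=
  fun z' => obsP h ν (t + 1) y z' * pred K t π γ z' / Pobs K h ν t π γ y

/-- The dynamic-programming value functions on beliefs, with `V_T ≡ 0`. -/
noncomputable def V (T : ℕ) (K : ℕ → M → G → PMF M) (c : ℕ → M → G → ℝ)
    (h : ℕ → M → N → Y) (ν : ℕ → PMF N) (t : ℕ) : (M → ℝ≥0∞) → ℝ :=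
  if t < T then fun π =>
    Finset.univ.inf' Finset.univ_nonempty (fun γ : G =>
      ctil c t π γ +
        ∑ y ∈ Finset.univ.filter (fun y => 0 < Pobs K h ν t π γ y),
          (Pobs K h ν t π γ y).toReal * V T K c h ν (t + 1) (bayes K h ν t π γ y))
  else fun _ => 0
termination_by T - t

/-- Closed-loop law of the state-observation trajectory `((Z_0,Y_0), …, (Z_t,Y_t))` under an
observation-history-feedback strategy `ψ`. -/
noncomputable def histPO (μ1 : PMF M) (K : ℕ → M → G → PMF M) (h : ℕ → M → N → Y)
    (ν : ℕ → PMF N) (ψ : (t : ℕ) → (Fin (t + 1) → Y) → G) :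
    (t : ℕ) → PMF (Fin (t + 1) → (M × Y))
  | 0 => μ1.bind (fun z => (ν 0).map (fun nn => fun _ => (z, h 0 z nn)))
  | t + 1 =>
    (histPO μ1 K h ν ψ t).bind (fun tr =>
      (K t (tr (Fin.last t)).1 (ψ t (fun s => (tr s).2))).bind (fun z' =>
        (ν (t + 1)).map (fun nn => Fin.snoc tr (z', h (t + 1) z' nn))))

/-- Expected total cost of strategy `ψ` over horizon `T`. -/
noncomputable def Jpo (T : ℕ) (μ1 : PMF M) (K : ℕ → M → G → PMF M) (c : ℕ → M → G → ℝ)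
    (h : ℕ → M → N → Y) (ν : ℕ → PMF N) (ψ : (t : ℕ) → (Fin (t + 1) → Y) → G) : ℝ :=
  ∑ t ∈ Finset.range T, ∑ tr : Fin (t + 1) → (M × Y),
    (histPO μ1 K h ν ψ t tr).toReal * c t (tr (Fin.last t)).1 (ψ t (fun s => (tr s).2))

/-- The initial posterior belief `Π_1` on `Z_1` given the first observation `y`. -/
noncomputable def initBel (μ1 : PMF M) (h : ℕ → M → N → Y) (ν : ℕ → PMF N) (y : Y) :
    M → ℝ≥0∞ :=
  fun z => obsP h ν 0 y z * μ1 z / ∑ z' : M, obsP h ν 0 y z' * μ1 z'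

/-- The belief process generated from the Bayes updates by a belief-Markov strategy. -/
noncomputable def Bel (μ1 : PMF M) (K : ℕ → M → G → PMF M) (h : ℕ → M → N → Y)
    (ν : ℕ → PMF N) (ψstar : ℕ → (M → ℝ≥0∞) → G) :
    (t : ℕ) → (Fin (t + 1) → Y) → (M → ℝ≥0∞)
  | 0 => fun ys => initBel μ1 h ν (ys 0)
  | t + 1 => fun ys =>
      let π := Bel μ1 K h ν ψstar t (fun s => ys s.castSucc)
      bayes K h ν t π (ψstar t π) (ys (Fin.last (t + 1)))

set_option linter.unusedSectionVars false
set_option linter.unusedVariables false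

section Aux
variable (μ1 : PMF M) (K : ℕ → M → G → PMF M) (c : ℕ → M → G → ℝ)
  (h : ℕ → M → N → Y) (ν : ℕ → PMF N) (ψ : (t : ℕ) → (Fin (t + 1) → Y) → G)

/-- Joint weight `P(Y_{0..t} = ys, Z_t = z)` under strategy `ψ`. -/
noncomputable def Wgt : (t : ℕ) → (Fin (t + 1) → Y) → M → ℝ≥0∞
  | 0 => fun ys z => μ1 z * obsP h ν 0 (ys 0) z
  | t + 1 => fun ys z' =>
      pred K t (Wgt t (Fin.init ys)) (ψ t (Fin.init ys)) z' *
        obsP h ν (t + 1) (ys (Fin.last (t + 1))) z'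

noncomputable def pW (t : ℕ) (ys : Fin (t + 1) → Y) : ℝ≥0∞ :=
  ∑ z : M, Wgt μ1 K h ν ψ t ys z

noncomputable def bW (t : ℕ) (ys : Fin (t + 1) → Y) : M → ℝ≥0∞ :=
  fun z => Wgt μ1 K h ν ψ t ys z / pW μ1 K h ν ψ t ys

lemma obsP_le_one (t : ℕ) (y : Y) (z : M) : obsP h ν t y z ≤ 1 := by
  calc obsP h ν t y z ≤ ∑ nn : N, ν t nn :=
        Finset.sum_le_sum_of_subset (Finset.filter_subset _ _)
    _ ≤ 1 := by
        rw [← tsum_fintype (L := .unconditional _)]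
        exact le_of_eq (ν t).tsum_coe

lemma pW_le_one : ∀ (t : ℕ) (ys : Fin (t + 1) → Y), pW μ1 K h ν ψ t ys ≤ 1 := by
  intro t
  induction t with
  | zero =>
    intro ys
    calc pW μ1 K h ν ψ 0 ys ≤ ∑ z : M, μ1 z * 1 :=
          Finset.sum_le_sum (fun z _ => mul_le_mul_right (obsP_le_one h ν _ _ _) _)
      _ ≤ 1 := by
          simp only [mul_one]
          rw [← tsum_fintype (L := .unconditional _)]
          exact le_of_eq μ1.tsum_coe
  | succ t ih =>
    intro ys
    have h1 : pW μ1 K h ν ψ (t + 1) ys ≤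
        ∑ z' : M, pred K t (Wgt μ1 K h ν ψ t (Fin.init ys)) (ψ t (Fin.init ys)) z' := by
      refine Finset.sum_le_sum (fun z' _ => ?_)
      exact (mul_le_mul_right (obsP_le_one h ν _ _ _) _).trans (by rw [mul_one])
    refine h1.trans ?_
    unfold pred
    rw [Finset.sum_comm]
    calc ∑ z : M, ∑ z' : M, Wgt μ1 K h ν ψ t (Fin.init ys) z * K t z (ψ t (Fin.init ys)) z'
        = ∑ z : M, Wgt μ1 K h ν ψ t (Fin.init ys) z *
            ∑ z' : M, K t z (ψ t (Fin.init ys)) z' := by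
          simp [Finset.mul_sum]
      _ ≤ ∑ z : M, Wgt μ1 K h ν ψ t (Fin.init ys) z * 1 := by
          refine Finset.sum_le_sum (fun z _ => mul_le_mul_right ?_ _)
          rw [← tsum_fintype (L := .unconditional _)]
          exact le_of_eq (K t z (ψ t (Fin.init ys))).tsum_coe
      _ ≤ 1 := by simpa only [mul_one, pW] using ih (Fin.init ys)

lemma pW_ne_top (t : ℕ) (ys : Fin (t + 1) → Y) : pW μ1 K h ν ψ t ys ≠ ⊤ :=
  ((pW_le_one μ1 K h ν ψ t ys).trans_lt ENNReal.one_lt_top).ne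

lemma Wgt_le_pW (t : ℕ) (ys : Fin (t + 1) → Y) (z : M) :
    Wgt μ1 K h ν ψ t ys z ≤ pW μ1 K h ν ψ t ys :=
  Finset.single_le_sum (f := fun z => Wgt μ1 K h ν ψ t ys z) (fun _ _ => zero_le)
    (Finset.mem_univ z)

lemma Wgt_ne_top (t : ℕ) (ys : Fin (t + 1) → Y) (z : M) : Wgt μ1 K h ν ψ t ys z ≠ ⊤ :=
  (((Wgt_le_pW μ1 K h ν ψ t ys z).trans (pW_le_one μ1 K h ν ψ t ys)).trans_lt
    ENNReal.one_lt_top).ne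

lemma Wgt_snoc (t : ℕ) (ys : Fin (t + 1) → Y) (y : Y) (z' : M) :
    Wgt μ1 K h ν ψ (t + 1) (Fin.snoc ys y) z' =
      pred K t (Wgt μ1 K h ν ψ t ys) (ψ t ys) z' * obsP h ν (t + 1) y z' := by
  simp only [Wgt, Fin.init_snoc, Fin.snoc_last]

lemma pW_snoc (t : ℕ) (ys : Fin (t + 1) → Y) (y : Y) :
    pW μ1 K h ν ψ (t + 1) (Fin.snoc ys y) =
      Pobs K h ν t (Wgt μ1 K h ν ψ t ys) (ψ t ys) y := by
  unfold pW Pobs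
  exact Finset.sum_congr rfl (fun z' _ => Wgt_snoc μ1 K h ν ψ t ys y z')

-- linearity in π
lemma pred_div (t : ℕ) (π : M → ℝ≥0∞) (p : ℝ≥0∞) (γ : G) (z' : M) :
    pred K t (fun z => π z / p) γ z' = pred K t π γ z' / p := by
  unfold pred
  simp only [div_eq_mul_inv, Finset.sum_mul]
  exact Finset.sum_congr rfl (fun z _ => by ring)

lemma Pobs_div (t : ℕ) (π : M → ℝ≥0∞) (p : ℝ≥0∞) (γ : G) (y : Y) :
    Pobs K h ν t (fun z => π z / p) γ y = Pobs K h ν t π γ y / p := by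
  unfold Pobs
  simp only [pred_div]
  simp only [div_eq_mul_inv, Finset.sum_mul]
  exact Finset.sum_congr rfl (fun z' _ => by ring)

lemma ennreal_div_div (x y p : ℝ≥0∞) (hp0 : p ≠ 0) (hpt : p ≠ ⊤) :
    (x / p) / (y / p) = x / y := by
  rw [div_eq_mul_inv, div_eq_mul_inv, div_eq_mul_inv, div_eq_mul_inv,
    ENNReal.mul_inv (Or.inr (ENNReal.inv_ne_top.2 hp0)) (Or.inr (ENNReal.inv_ne_zero.2 hpt)),
    inv_inv]
  calc x * p⁻¹ * (y⁻¹ * p) = x * y⁻¹ * (p⁻¹ * p) := by ring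
    _ = x * y⁻¹ := by rw [ENNReal.inv_mul_cancel hp0 hpt, mul_one]

lemma bayes_div (t : ℕ) (π : M → ℝ≥0∞) (p : ℝ≥0∞) (hp0 : p ≠ 0) (hpt : p ≠ ⊤)
    (γ : G) (y : Y) :
    bayes K h ν t (fun z => π z / p) γ y = bayes K h ν t π γ y := by
  funext z'
  unfold bayes
  rw [pred_div, Pobs_div, mul_div_assoc, ennreal_div_div _ _ _ hp0 hpt, ← mul_div_assoc]

lemma bW_zero (ys : Fin 1 → Y) : bW μ1 K h ν ψ 0 ys = initBel μ1 h ν (ys 0) := by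
  funext z
  show Wgt μ1 K h ν ψ 0 ys z / pW μ1 K h ν ψ 0 ys = _
  unfold initBel pW
  show μ1 z * obsP h ν 0 (ys 0) z / (∑ z' : M, μ1 z' * obsP h ν 0 (ys 0) z') = _
  simp_rw [mul_comm]

lemma pW_snoc' (t : ℕ) (ys : Fin (t + 1) → Y) (y : Y) (hp : pW μ1 K h ν ψ t ys ≠ 0) :
    pW μ1 K h ν ψ (t + 1) (Fin.snoc ys y) =
      pW μ1 K h ν ψ t ys * Pobs K h ν t (bW μ1 K h ν ψ t ys) (ψ t ys) y := by
  rw [pW_snoc]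
  unfold bW
  rw [Pobs_div, ENNReal.mul_div_cancel hp (pW_ne_top μ1 K h ν ψ t ys)]

lemma bW_snoc (t : ℕ) (ys : Fin (t + 1) → Y) (y : Y) (hp : pW μ1 K h ν ψ t ys ≠ 0) :
    bW μ1 K h ν ψ (t + 1) (Fin.snoc ys y) =
      bayes K h ν t (bW μ1 K h ν ψ t ys) (ψ t ys) y := by
  funext z'
  unfold bW
  rw [bayes_div _ _ _ _ _ _ hp (pW_ne_top μ1 K h ν ψ t ys)]
  rw [Wgt_snoc, pW_snoc]
  unfold bayes
  rw [mul_comm]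


/-- snoc equivalence for plain function types -/
def snocE (n : ℕ) (α : Type*) : ((Fin (n + 1) → α) × α) ≃ (Fin (n + 2) → α) where
  toFun p := Fin.snoc p.1 p.2
  invFun f := (Fin.init f, f (Fin.last (n + 1)))
  left_inv p := by
    ext <;> simp [Fin.init_snoc, Fin.snoc_last, Fin.init]
  right_inv f := Fin.snoc_init_self f

lemma snoc_obs {n : ℕ} (tr0 : Fin (n + 1) → M × Y) (v : M × Y) :
    (fun s => ((Fin.snoc tr0 v : Fin (n + 2) → M × Y) s).2)
      = Fin.snoc (fun s => (tr0 s).2) v.2 := by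
  funext s
  refine Fin.lastCases ?_ (fun i => ?_) s <;> simp

lemma obs_group (t : ℕ) (z' : M) (g : Y → ℝ≥0∞) :
    ∑ nn : N, ν t nn * g (h t z' nn) = ∑ y : Y, obsP h ν t y z' * g y := by
  rw [← Finset.sum_fiberwise Finset.univ (fun nn => h t z' nn)
    (fun nn => ν t nn * g (h t z' nn))]
  refine Finset.sum_congr rfl fun y _ => ?_
  rw [obsP, Finset.sum_mul]
  refine Finset.sum_congr rfl fun nn hnn => ?_
  rw [Finset.mem_filter] at hnn
  rw [hnn.2]

lemma sum3_comm {α β γ : Type*} [Fintype α] [Fintype β] [Fintype γ] (f : α → β → γ → ℝ≥0∞) :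
    ∑ a : α, ∑ b : β, ∑ c : γ, f a b c = ∑ c : γ, ∑ b : β, ∑ a : α, f a b c :=
  calc ∑ a : α, ∑ b : β, ∑ c : γ, f a b c
      = ∑ b : β, ∑ a : α, ∑ c : γ, f a b c := Finset.sum_comm
    _ = ∑ b : β, ∑ c : γ, ∑ a : α, f a b c :=
        Finset.sum_congr rfl fun b _ => Finset.sum_comm
    _ = ∑ c : γ, ∑ b : β, ∑ a : α, f a b c := Finset.sum_comm

lemma hist_exp : ∀ (t : ℕ) (F : (Fin (t + 1) → Y) → M → ℝ≥0∞),
    ∑ tr : Fin (t + 1) → M × Y,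
        histPO μ1 K h ν ψ t tr * F (fun s => (tr s).2) (tr (Fin.last t)).1
      = ∑ ys : Fin (t + 1) → Y, ∑ z : M, Wgt μ1 K h ν ψ t ys z * F ys z := by
  intro t
  induction t with
  | zero =>
    intro F
    have hh : ∀ tr : Fin 1 → M × Y, histPO μ1 K h ν ψ 0 tr
        = ∑ z : M, ∑ nn : N,
            if tr = (fun _ => (z, h 0 z nn)) then μ1 z * ν 0 nn else 0 := by
      intro tr
      show (μ1.bind fun z => (ν 0).map (fun nn => fun _ => (z, h 0 z nn))) tr = _
      rw [PMF.bind_apply, tsum_fintype]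
      refine Finset.sum_congr rfl fun z _ => ?_
      rw [PMF.map_apply, tsum_fintype, Finset.mul_sum]
      refine Finset.sum_congr rfl fun nn _ => ?_
      split_ifs <;> simp
    calc ∑ tr : Fin 1 → M × Y,
          histPO μ1 K h ν ψ 0 tr * F (fun s => (tr s).2) (tr (Fin.last 0)).1
        = ∑ z : M, ∑ nn : N, μ1 z * ν 0 nn * F (fun _ => h 0 z nn) z := by
          simp_rw [hh, Finset.sum_mul, ite_mul, zero_mul]
          rw [Finset.sum_comm]
          refine Finset.sum_congr rfl fun z _ => ?_
          rw [Finset.sum_comm]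
          refine Finset.sum_congr rfl fun nn _ => ?_
          rw [Finset.sum_eq_single_of_mem ((fun _ => (z, h 0 z nn)) : Fin 1 → M × Y)
            (Finset.mem_univ _) (fun b _ hb => by rw [if_neg hb]), if_pos rfl]
      _ = ∑ z : M, ∑ y : Y, obsP h ν 0 y z * (μ1 z * F (fun _ => y) z) := by
          refine Finset.sum_congr rfl fun z _ => ?_
          rw [← obs_group h ν 0 z (fun y => μ1 z * F (fun _ => y) z)]
          exact Finset.sum_congr rfl fun nn _ => by ring
      _ = ∑ y : Y, ∑ z : M, obsP h ν 0 y z * (μ1 z * F (fun _ => y) z) := Finset.sum_comm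
      _ = ∑ ys : Fin 1 → Y, ∑ z : M, Wgt μ1 K h ν ψ 0 ys z * F ys z := by
          refine Fintype.sum_equiv (Equiv.funUnique (Fin 1) Y).symm _ _ fun y => ?_
          refine Finset.sum_congr rfl fun z _ => ?_
          show obsP h ν 0 y z * (μ1 z * F (fun _ => y) z)
            = Wgt μ1 K h ν ψ 0 (fun _ => y) z * F (fun _ => y) z
          show _ = μ1 z * obsP h ν 0 ((fun _ => y : Fin 1 → Y) 0) z * F (fun _ => y) z
          ring
  | succ t ih =>
    intro F
    have hh : ∀ tr : Fin (t + 2) → M × Y, histPO μ1 K h ν ψ (t + 1) tr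
        = ∑ tr0 : Fin (t + 1) → M × Y, ∑ z' : M, ∑ nn : N,
            if tr = Fin.snoc tr0 (z', h (t + 1) z' nn) then
              histPO μ1 K h ν ψ t tr0 *
                (K t (tr0 (Fin.last t)).1 (ψ t (fun s => (tr0 s).2)) z' * ν (t + 1) nn)
            else 0 := by
      intro tr
      show ((histPO μ1 K h ν ψ t).bind fun tr0 =>
        (K t (tr0 (Fin.last t)).1 (ψ t (fun s => (tr0 s).2))).bind fun z' =>
          (ν (t + 1)).map (fun nn => Fin.snoc tr0 (z', h (t + 1) z' nn))) tr = _
      rw [PMF.bind_apply, tsum_fintype]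
      refine Finset.sum_congr rfl fun tr0 _ => ?_
      rw [PMF.bind_apply, tsum_fintype, Finset.mul_sum]
      refine Finset.sum_congr rfl fun z' _ => ?_
      rw [PMF.map_apply, tsum_fintype, Finset.mul_sum, Finset.mul_sum]
      refine Finset.sum_congr rfl fun nn _ => ?_
      split_ifs <;> simp [mul_assoc]
    calc ∑ tr : Fin (t + 2) → M × Y,
          histPO μ1 K h ν ψ (t + 1) tr * F (fun s => (tr s).2) (tr (Fin.last (t + 1))).1
        = ∑ tr0 : Fin (t + 1) → M × Y, ∑ z' : M, ∑ nn : N,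
            histPO μ1 K h ν ψ t tr0 *
              (K t (tr0 (Fin.last t)).1 (ψ t (fun s => (tr0 s).2)) z' * (ν (t + 1) nn *
                F (Fin.snoc (fun s => (tr0 s).2) (h (t + 1) z' nn)) z')) := by
          simp_rw [hh, Finset.sum_mul, ite_mul, zero_mul]
          rw [Finset.sum_comm]
          refine Finset.sum_congr rfl fun tr0 _ => ?_
          rw [Finset.sum_comm]
          refine Finset.sum_congr rfl fun z' _ => ?_
          rw [Finset.sum_comm]
          refine Finset.sum_congr rfl fun nn _ => ?_
          rw [Finset.sum_eq_single_of_mem (Fin.snoc tr0 (z', h (t + 1) z' nn))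
            (Finset.mem_univ _) (fun b _ hb => by rw [if_neg hb]), if_pos rfl, snoc_obs]
          simp only [Fin.snoc_last]
          ring
      _ = ∑ tr0 : Fin (t + 1) → M × Y, histPO μ1 K h ν ψ t tr0 *
            (fun ys z => ∑ z' : M, K t z (ψ t ys) z' *
              ∑ nn : N, ν (t + 1) nn * F (Fin.snoc ys (h (t + 1) z' nn)) z')
            (fun s => (tr0 s).2) (tr0 (Fin.last t)).1 := by
          refine Finset.sum_congr rfl fun tr0 _ => ?_
          simp only [Finset.mul_sum]
      _ = ∑ ys : Fin (t + 1) → Y, ∑ z : M, Wgt μ1 K h ν ψ t ys z *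
            ∑ z' : M, K t z (ψ t ys) z' *
              ∑ nn : N, ν (t + 1) nn * F (Fin.snoc ys (h (t + 1) z' nn)) z' :=
          ih (fun ys z => ∑ z' : M, K t z (ψ t ys) z' *
            ∑ nn : N, ν (t + 1) nn * F (Fin.snoc ys (h (t + 1) z' nn)) z')
      _ = ∑ ys : Fin (t + 1) → Y, ∑ y : Y, ∑ z' : M,
            Wgt μ1 K h ν ψ (t + 1) (Fin.snoc ys y) z' * F (Fin.snoc ys y) z' := by
          refine Finset.sum_congr rfl fun ys _ => ?_
          calc ∑ z : M, Wgt μ1 K h ν ψ t ys z * ∑ z' : M, K t z (ψ t ys) z' *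
                  ∑ nn : N, ν (t + 1) nn * F (Fin.snoc ys (h (t + 1) z' nn)) z'
              = ∑ z : M, ∑ z' : M, ∑ y : Y, Wgt μ1 K h ν ψ t ys z *
                  (K t z (ψ t ys) z' * (obsP h ν (t + 1) y z' * F (Fin.snoc ys y) z')) := by
                refine Finset.sum_congr rfl fun z _ => ?_
                rw [Finset.mul_sum]
                refine Finset.sum_congr rfl fun z' _ => ?_
                rw [obs_group h ν (t + 1) z' (fun y => F (Fin.snoc ys y) z'),
                  Finset.mul_sum, Finset.mul_sum]
            _ = ∑ y : Y, ∑ z' : M, ∑ z : M, Wgt μ1 K h ν ψ t ys z *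
                  (K t z (ψ t ys) z' * (obsP h ν (t + 1) y z' * F (Fin.snoc ys y) z')) :=
                sum3_comm _
            _ = ∑ y : Y, ∑ z' : M,
                  Wgt μ1 K h ν ψ (t + 1) (Fin.snoc ys y) z' * F (Fin.snoc ys y) z' := by
                refine Finset.sum_congr rfl fun y _ => Finset.sum_congr rfl fun z' _ => ?_
                rw [Wgt_snoc, pred, Finset.sum_mul, Finset.sum_mul]
                exact Finset.sum_congr rfl fun z _ => by ring
      _ = ∑ ys' : Fin (t + 2) → Y, ∑ z : M, Wgt μ1 K h ν ψ (t + 1) ys' z * F ys' z := by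
          have e1 := Fintype.sum_prod_type (f := fun p : (Fin (t + 1) → Y) × Y =>
            ∑ z : M, Wgt μ1 K h ν ψ (t + 1) (Fin.snoc p.1 p.2) z * F (Fin.snoc p.1 p.2) z)
          have e2 := Fintype.sum_equiv (snocE t Y)
            (fun p : (Fin (t + 1) → Y) × Y =>
              ∑ z : M, Wgt μ1 K h ν ψ (t + 1) (Fin.snoc p.1 p.2) z * F (Fin.snoc p.1 p.2) z)
            (fun ys' => ∑ z : M, Wgt μ1 K h ν ψ (t + 1) ys' z * F ys' z)
            (fun p => rfl)
          exact e1.symm.trans e2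

lemma marg (t : ℕ) (ys : Fin (t + 1) → Y) (z : M) :
    ∑ tr ∈ Finset.univ.filter (fun tr : Fin (t + 1) → M × Y =>
        (fun s => (tr s).2) = ys ∧ (tr (Fin.last t)).1 = z),
      histPO μ1 K h ν ψ t tr = Wgt μ1 K h ν ψ t ys z := by
  have key := hist_exp μ1 K h ν ψ t
    (fun ys' z' => (if ys' = ys then (1 : ℝ≥0∞) else 0) * (if z' = z then 1 else 0))
  calc ∑ tr ∈ Finset.univ.filter (fun tr : Fin (t + 1) → M × Y =>
          (fun s => (tr s).2) = ys ∧ (tr (Fin.last t)).1 = z),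
        histPO μ1 K h ν ψ t tr
      = ∑ tr : Fin (t + 1) → M × Y, histPO μ1 K h ν ψ t tr *
          ((if (fun s => (tr s).2) = ys then (1 : ℝ≥0∞) else 0) *
            (if (tr (Fin.last t)).1 = z then 1 else 0)) := by
        rw [Finset.sum_filter]
        refine Finset.sum_congr rfl fun tr _ => ?_
        by_cases h1 : (fun s => (tr s).2) = ys <;>
          by_cases h2 : (tr (Fin.last t)).1 = z <;> simp [h1, h2]
    _ = ∑ ys' : Fin (t + 1) → Y, ∑ z' : M, Wgt μ1 K h ν ψ t ys' z' *
          ((if ys' = ys then (1 : ℝ≥0∞) else 0) * (if z' = z then 1 else 0)) := key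
    _ = ∑ ys' : Fin (t + 1) → Y,
          (if ys' = ys then Wgt μ1 K h ν ψ t ys' z else 0) := by
        refine Finset.sum_congr rfl fun ys' _ => ?_
        by_cases h1 : ys' = ys
        · simp only [h1, if_true]
          simp [mul_ite, Finset.sum_ite_eq']
        · simp [h1]
    _ = Wgt μ1 K h ν ψ t ys z := by
        rw [Finset.sum_eq_single_of_mem ys (Finset.mem_univ _)
          (fun b _ hb => by rw [if_neg hb]), if_pos rfl]

lemma hist_filter_obs (t : ℕ) (ys : Fin (t + 1) → Y) :
    ∑ tr ∈ Finset.univ.filter (fun tr : Fin (t + 1) → M × Y => ∀ s, (tr s).2 = ys s),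
      histPO μ1 K h ν ψ t tr = pW μ1 K h ν ψ t ys := by
  have key := hist_exp μ1 K h ν ψ t (fun ys' _ => (if ys' = ys then (1 : ℝ≥0∞) else 0))
  calc ∑ tr ∈ Finset.univ.filter (fun tr : Fin (t + 1) → M × Y => ∀ s, (tr s).2 = ys s),
        histPO μ1 K h ν ψ t tr
      = ∑ tr : Fin (t + 1) → M × Y, histPO μ1 K h ν ψ t tr *
          (if (fun s => (tr s).2) = ys then (1 : ℝ≥0∞) else 0) := by
        rw [Finset.sum_filter]
        refine Finset.sum_congr rfl fun tr _ => ?_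
        by_cases h1 : (fun s => (tr s).2) = ys
        · rw [if_pos h1, if_pos (funext_iff.mp h1), mul_one]
        · rw [if_neg h1, if_neg (fun hh => h1 (funext hh)), mul_zero]
    _ = ∑ ys' : Fin (t + 1) → Y, ∑ z' : M, Wgt μ1 K h ν ψ t ys' z' *
          (if ys' = ys then (1 : ℝ≥0∞) else 0) := key
    _ = pW μ1 K h ν ψ t ys := by
        rw [Finset.sum_eq_single_of_mem ys (Finset.mem_univ _)
          (fun b _ hb => by simp [if_neg hb])]
        simp [pW]

lemma cost_exp (t : ℕ) (f : (Fin (t + 1) → Y) → M → ℝ) :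
    ∑ tr : Fin (t + 1) → M × Y,
        (histPO μ1 K h ν ψ t tr).toReal * f (fun s => (tr s).2) (tr (Fin.last t)).1
      = ∑ ys : Fin (t + 1) → Y, ∑ z : M, (Wgt μ1 K h ν ψ t ys z).toReal * f ys z := by
  rw [← Finset.sum_fiberwise Finset.univ
    (fun tr : Fin (t + 1) → M × Y => ((fun s => (tr s).2), (tr (Fin.last t)).1))
    (fun tr => (histPO μ1 K h ν ψ t tr).toReal * f (fun s => (tr s).2) (tr (Fin.last t)).1)]
  rw [Fintype.sum_prod_type]
  refine Finset.sum_congr rfl fun ys _ => Finset.sum_congr rfl fun z _ => ?_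
  calc ∑ tr ∈ Finset.univ.filter (fun tr : Fin (t + 1) → M × Y =>
          ((fun s => (tr s).2), (tr (Fin.last t)).1) = (ys, z)),
        (histPO μ1 K h ν ψ t tr).toReal * f (fun s => (tr s).2) (tr (Fin.last t)).1
      = ∑ tr ∈ Finset.univ.filter (fun tr : Fin (t + 1) → M × Y =>
          (fun s => (tr s).2) = ys ∧ (tr (Fin.last t)).1 = z),
        (histPO μ1 K h ν ψ t tr).toReal * f ys z := by
        rw [Finset.filter_congr (fun tr _ => by rw [Prod.mk.injEq])]
        refine Finset.sum_congr rfl fun tr htr => ?_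
        rw [Finset.mem_filter] at htr
        rw [htr.2.1, htr.2.2]
    _ = (Wgt μ1 K h ν ψ t ys z).toReal * f ys z := by
        rw [← Finset.sum_mul, ← ENNReal.toReal_sum
          (fun tr _ => PMF.apply_ne_top _ tr), marg]

end Aux

section Aux2
variable (μ1 : PMF M) (K : ℕ → M → G → PMF M) (c : ℕ → M → G → ℝ)
  (h : ℕ → M → N → Y) (ν : ℕ → PMF N) (ψ : (t : ℕ) → (Fin (t + 1) → Y) → G)

lemma V_eq_of_lt {T t : ℕ} (hlt : t < T) :
    V T K c h ν t = fun π : M → ℝ≥0∞ =>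
      Finset.univ.inf' Finset.univ_nonempty (fun γ : G =>
        ctil c t π γ +
          ∑ y ∈ Finset.univ.filter (fun y => 0 < Pobs K h ν t π γ y),
            (Pobs K h ν t π γ y).toReal * V T K c h ν (t + 1) (bayes K h ν t π γ y)) := by
  rw [V, if_pos hlt]

lemma V_eq_of_ge {T t : ℕ} (hge : ¬ t < T) : V T K c h ν t = fun _ => 0 := by
  rw [V, if_neg hge]

lemma Wgt_zero {t : ℕ} {ys : Fin (t + 1) → Y} (hp : pW μ1 K h ν ψ t ys = 0) (z : M) :
    Wgt μ1 K h ν ψ t ys z = 0 :=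
  le_antisymm ((Wgt_le_pW μ1 K h ν ψ t ys z).trans hp.le) zero_le

lemma pW_snoc_zero {t : ℕ} {ys : Fin (t + 1) → Y} (y : Y)
    (hp : pW μ1 K h ν ψ t ys = 0) :
    pW μ1 K h ν ψ (t + 1) (Fin.snoc ys y) = 0 := by
  rw [pW_snoc]
  unfold Pobs pred
  simp [Wgt_zero μ1 K h ν ψ hp]

lemma step_eq (T t : ℕ) :
    ∑ ys' : Fin (t + 2) → Y, (pW μ1 K h ν ψ (t + 1) ys').toReal *
        V T K c h ν (t + 1) (bW μ1 K h ν ψ (t + 1) ys')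
      = ∑ ys : Fin (t + 1) → Y, (pW μ1 K h ν ψ t ys).toReal *
          ∑ y ∈ Finset.univ.filter
            (fun y => 0 < Pobs K h ν t (bW μ1 K h ν ψ t ys) (ψ t ys) y),
            (Pobs K h ν t (bW μ1 K h ν ψ t ys) (ψ t ys) y).toReal *
              V T K c h ν (t + 1) (bayes K h ν t (bW μ1 K h ν ψ t ys) (ψ t ys) y) := by
  have e2 := Fintype.sum_equiv (snocE t Y)
    (fun p : (Fin (t + 1) → Y) × Y => (pW μ1 K h ν ψ (t + 1) (Fin.snoc p.1 p.2)).toReal *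
      V T K c h ν (t + 1) (bW μ1 K h ν ψ (t + 1) (Fin.snoc p.1 p.2)))
    (fun ys' => (pW μ1 K h ν ψ (t + 1) ys').toReal *
      V T K c h ν (t + 1) (bW μ1 K h ν ψ (t + 1) ys'))
    (fun p => rfl)
  rw [← e2, Fintype.sum_prod_type]
  refine Finset.sum_congr rfl fun ys _ => ?_
  by_cases hp : pW μ1 K h ν ψ t ys = 0
  · rw [hp]
    simp only [ENNReal.toReal_zero, zero_mul]
    refine Finset.sum_eq_zero fun y _ => ?_
    rw [pW_snoc_zero μ1 K h ν ψ y hp]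
    simp
  · calc ∑ y : Y, (pW μ1 K h ν ψ (t + 1) (Fin.snoc ys y)).toReal *
          V T K c h ν (t + 1) (bW μ1 K h ν ψ (t + 1) (Fin.snoc ys y))
        = ∑ y : Y, (pW μ1 K h ν ψ t ys).toReal *
            ((Pobs K h ν t (bW μ1 K h ν ψ t ys) (ψ t ys) y).toReal *
              V T K c h ν (t + 1) (bayes K h ν t (bW μ1 K h ν ψ t ys) (ψ t ys) y)) := by
          refine Finset.sum_congr rfl fun y _ => ?_
          rw [pW_snoc' μ1 K h ν ψ t ys y hp, bW_snoc μ1 K h ν ψ t ys y hp,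
            ENNReal.toReal_mul, mul_assoc]
      _ = (pW μ1 K h ν ψ t ys).toReal * ∑ y : Y,
            (Pobs K h ν t (bW μ1 K h ν ψ t ys) (ψ t ys) y).toReal *
              V T K c h ν (t + 1) (bayes K h ν t (bW μ1 K h ν ψ t ys) (ψ t ys) y) :=
          (Finset.mul_sum _ _ _).symm
      _ = (pW μ1 K h ν ψ t ys).toReal * ∑ y ∈ Finset.univ.filter
            (fun y => 0 < Pobs K h ν t (bW μ1 K h ν ψ t ys) (ψ t ys) y),
            (Pobs K h ν t (bW μ1 K h ν ψ t ys) (ψ t ys) y).toReal *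
              V T K c h ν (t + 1) (bayes K h ν t (bW μ1 K h ν ψ t ys) (ψ t ys) y) := by
          congr 1
          refine (Finset.sum_filter_of_ne fun y _ hne => ?_).symm
          rw [pos_iff_ne_zero]
          intro h0
          exact hne (by rw [h0]; simp)

lemma cost_step (t : ℕ) :
    ∑ ys : Fin (t + 1) → Y, ∑ z : M, (Wgt μ1 K h ν ψ t ys z).toReal * c t z (ψ t ys)
      = ∑ ys : Fin (t + 1) → Y, (pW μ1 K h ν ψ t ys).toReal *
          ctil c t (bW μ1 K h ν ψ t ys) (ψ t ys) := by
  refine Finset.sum_congr rfl fun ys _ => ?_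
  by_cases hp : pW μ1 K h ν ψ t ys = 0
  · rw [hp]
    simp [Wgt_zero μ1 K h ν ψ hp]
  · have hpt := pW_ne_top μ1 K h ν ψ t ys
    have hne : (pW μ1 K h ν ψ t ys).toReal ≠ 0 := ENNReal.toReal_ne_zero.mpr ⟨hp, hpt⟩
    rw [ctil, Finset.mul_sum]
    refine Finset.sum_congr rfl fun z _ => ?_
    show (Wgt μ1 K h ν ψ t ys z).toReal * c t z (ψ t ys)
      = (pW μ1 K h ν ψ t ys).toReal *
        ((Wgt μ1 K h ν ψ t ys z / pW μ1 K h ν ψ t ys).toReal * c t z (ψ t ys))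
    rw [ENNReal.toReal_div]
    field_simp

lemma dp_le (T : ℕ) : ∀ (d t : ℕ), T = t + d →
    ∑ ys : Fin (t + 1) → Y, (pW μ1 K h ν ψ t ys).toReal *
        V T K c h ν t (bW μ1 K h ν ψ t ys)
      ≤ ∑ s ∈ Finset.Ico t T, ∑ ys : Fin (s + 1) → Y, ∑ z : M,
          (Wgt μ1 K h ν ψ s ys z).toReal * c s z (ψ s ys) := by
  intro d
  induction d with
  | zero =>
    intro t ht
    have hts : T = t := by omega
    subst hts
    rw [V_eq_of_ge K c h ν (lt_irrefl T), Finset.Ico_self, Finset.sum_empty]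
    simp
  | succ d ih =>
    intro t ht
    have hlt : t < T := by omega
    calc ∑ ys : Fin (t + 1) → Y, (pW μ1 K h ν ψ t ys).toReal *
          V T K c h ν t (bW μ1 K h ν ψ t ys)
        ≤ ∑ ys : Fin (t + 1) → Y, (pW μ1 K h ν ψ t ys).toReal *
            (ctil c t (bW μ1 K h ν ψ t ys) (ψ t ys) +
              ∑ y ∈ Finset.univ.filter
                (fun y => 0 < Pobs K h ν t (bW μ1 K h ν ψ t ys) (ψ t ys) y),
                (Pobs K h ν t (bW μ1 K h ν ψ t ys) (ψ t ys) y).toReal *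
                  V T K c h ν (t + 1)
                    (bayes K h ν t (bW μ1 K h ν ψ t ys) (ψ t ys) y)) := by
          refine Finset.sum_le_sum fun ys _ => ?_
          refine mul_le_mul_of_nonneg_left ?_ ENNReal.toReal_nonneg
          rw [V_eq_of_lt K c h ν hlt]
          exact Finset.inf'_le _ (Finset.mem_univ (ψ t ys))
      _ = (∑ ys : Fin (t + 1) → Y, (pW μ1 K h ν ψ t ys).toReal *
              ctil c t (bW μ1 K h ν ψ t ys) (ψ t ys)) +
            ∑ ys : Fin (t + 1) → Y, (pW μ1 K h ν ψ t ys).toReal *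
              ∑ y ∈ Finset.univ.filter
                (fun y => 0 < Pobs K h ν t (bW μ1 K h ν ψ t ys) (ψ t ys) y),
                (Pobs K h ν t (bW μ1 K h ν ψ t ys) (ψ t ys) y).toReal *
                  V T K c h ν (t + 1)
                    (bayes K h ν t (bW μ1 K h ν ψ t ys) (ψ t ys) y) := by
          simp_rw [mul_add]
          exact Finset.sum_add_distrib
      _ = (∑ ys : Fin (t + 1) → Y, ∑ z : M,
              (Wgt μ1 K h ν ψ t ys z).toReal * c t z (ψ t ys)) +
            ∑ ys' : Fin (t + 2) → Y, (pW μ1 K h ν ψ (t + 1) ys').toReal *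
              V T K c h ν (t + 1) (bW μ1 K h ν ψ (t + 1) ys') := by
          rw [cost_step, step_eq]
      _ ≤ (∑ ys : Fin (t + 1) → Y, ∑ z : M,
              (Wgt μ1 K h ν ψ t ys z).toReal * c t z (ψ t ys)) +
            ∑ s ∈ Finset.Ico (t + 1) T, ∑ ys : Fin (s + 1) → Y, ∑ z : M,
              (Wgt μ1 K h ν ψ s ys z).toReal * c s z (ψ s ys) :=
          add_le_add_right (ih (t + 1) (by omega)) _
      _ = ∑ s ∈ Finset.Ico t T, ∑ ys : Fin (s + 1) → Y, ∑ z : M,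
            (Wgt μ1 K h ν ψ s ys z).toReal * c s z (ψ s ys) :=
          (Finset.sum_eq_sum_Ico_succ_bot hlt (fun s => ∑ ys : Fin (s + 1) → Y, ∑ z : M,
            (Wgt μ1 K h ν ψ s ys z).toReal * c s z (ψ s ys))).symm

lemma dp_eq (T : ℕ)
    (Hopt : ∀ t, t < T → ∀ ys : Fin (t + 1) → Y, pW μ1 K h ν ψ t ys ≠ 0 →
      V T K c h ν t (bW μ1 K h ν ψ t ys) =
        ctil c t (bW μ1 K h ν ψ t ys) (ψ t ys) +
          ∑ y ∈ Finset.univ.filter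
            (fun y => 0 < Pobs K h ν t (bW μ1 K h ν ψ t ys) (ψ t ys) y),
            (Pobs K h ν t (bW μ1 K h ν ψ t ys) (ψ t ys) y).toReal *
              V T K c h ν (t + 1) (bayes K h ν t (bW μ1 K h ν ψ t ys) (ψ t ys) y)) :
    ∀ (d t : ℕ), T = t + d →
    ∑ ys : Fin (t + 1) → Y, (pW μ1 K h ν ψ t ys).toReal *
        V T K c h ν t (bW μ1 K h ν ψ t ys)
      = ∑ s ∈ Finset.Ico t T, ∑ ys : Fin (s + 1) → Y, ∑ z : M,
          (Wgt μ1 K h ν ψ s ys z).toReal * c s z (ψ s ys) := by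
  intro d
  induction d with
  | zero =>
    intro t ht
    have hts : T = t := by omega
    subst hts
    rw [V_eq_of_ge K c h ν (lt_irrefl T), Finset.Ico_self, Finset.sum_empty]
    simp
  | succ d ih =>
    intro t ht
    have hlt : t < T := by omega
    calc ∑ ys : Fin (t + 1) → Y, (pW μ1 K h ν ψ t ys).toReal *
          V T K c h ν t (bW μ1 K h ν ψ t ys)
        = ∑ ys : Fin (t + 1) → Y, (pW μ1 K h ν ψ t ys).toReal *
            (ctil c t (bW μ1 K h ν ψ t ys) (ψ t ys) +
              ∑ y ∈ Finset.univ.filter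
                (fun y => 0 < Pobs K h ν t (bW μ1 K h ν ψ t ys) (ψ t ys) y),
                (Pobs K h ν t (bW μ1 K h ν ψ t ys) (ψ t ys) y).toReal *
                  V T K c h ν (t + 1)
                    (bayes K h ν t (bW μ1 K h ν ψ t ys) (ψ t ys) y)) := by
          refine Finset.sum_congr rfl fun ys _ => ?_
          by_cases hp : pW μ1 K h ν ψ t ys = 0
          · rw [hp]
            simp
          · rw [Hopt t hlt ys hp]
      _ = (∑ ys : Fin (t + 1) → Y, (pW μ1 K h ν ψ t ys).toReal *
              ctil c t (bW μ1 K h ν ψ t ys) (ψ t ys)) +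
            ∑ ys : Fin (t + 1) → Y, (pW μ1 K h ν ψ t ys).toReal *
              ∑ y ∈ Finset.univ.filter
                (fun y => 0 < Pobs K h ν t (bW μ1 K h ν ψ t ys) (ψ t ys) y),
                (Pobs K h ν t (bW μ1 K h ν ψ t ys) (ψ t ys) y).toReal *
                  V T K c h ν (t + 1)
                    (bayes K h ν t (bW μ1 K h ν ψ t ys) (ψ t ys) y) := by
          simp_rw [mul_add]
          exact Finset.sum_add_distrib
      _ = (∑ ys : Fin (t + 1) → Y, ∑ z : M,
              (Wgt μ1 K h ν ψ t ys z).toReal * c t z (ψ t ys)) +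
            ∑ ys' : Fin (t + 2) → Y, (pW μ1 K h ν ψ (t + 1) ys').toReal *
              V T K c h ν (t + 1) (bW μ1 K h ν ψ (t + 1) ys') := by
          rw [cost_step, step_eq]
      _ = (∑ ys : Fin (t + 1) → Y, ∑ z : M,
              (Wgt μ1 K h ν ψ t ys z).toReal * c t z (ψ t ys)) +
            ∑ s ∈ Finset.Ico (t + 1) T, ∑ ys : Fin (s + 1) → Y, ∑ z : M,
              (Wgt μ1 K h ν ψ s ys z).toReal * c s z (ψ s ys) := by
          rw [ih (t + 1) (by omega)]
      _ = ∑ s ∈ Finset.Ico t T, ∑ ys : Fin (s + 1) → Y, ∑ z : M,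
            (Wgt μ1 K h ν ψ s ys z).toReal * c s z (ψ s ys) :=
          (Finset.sum_eq_sum_Ico_succ_bot hlt (fun s => ∑ ys : Fin (s + 1) → Y, ∑ z : M,
            (Wgt μ1 K h ν ψ s ys z).toReal * c s z (ψ s ys))).symm

lemma Jpo_eq (T : ℕ) :
    Jpo T μ1 K c h ν ψ = ∑ s ∈ Finset.Ico 0 T, ∑ ys : Fin (s + 1) → Y, ∑ z : M,
      (Wgt μ1 K h ν ψ s ys z).toReal * c s z (ψ s ys) := by
  rw [Jpo, Finset.range_eq_Ico]
  exact Finset.sum_congr rfl fun t _ => cost_exp μ1 K h ν ψ t (fun ys z => c t z (ψ t ys))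

lemma init_sum (T : ℕ) :
    ∑ y : Y, (∑ z : M, obsP h ν 0 y z * μ1 z).toReal * V T K c h ν 0 (initBel μ1 h ν y)
      = ∑ ys : Fin 1 → Y, (pW μ1 K h ν ψ 0 ys).toReal *
          V T K c h ν 0 (bW μ1 K h ν ψ 0 ys) := by
  refine Fintype.sum_equiv (Equiv.funUnique (Fin 1) Y).symm _ _ fun y => ?_
  show (∑ z : M, obsP h ν 0 y z * μ1 z).toReal * V T K c h ν 0 (initBel μ1 h ν y)
    = (pW μ1 K h ν ψ 0 (fun _ => y)).toReal * V T K c h ν 0 (bW μ1 K h ν ψ 0 (fun _ => y))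
  rw [bW_zero μ1 K h ν ψ (fun _ => y)]
  have : pW μ1 K h ν ψ 0 (fun _ => y) = ∑ z : M, obsP h ν 0 y z * μ1 z :=
    Finset.sum_congr rfl fun z _ => mul_comm _ _
  rw [this]

end Aux2

lemma Bel_eq (μ1 : PMF M) (K : ℕ → M → G → PMF M) (h : ℕ → M → N → Y) (ν : ℕ → PMF N)
    (ψstar : ℕ → (M → ℝ≥0∞) → G) :
    ∀ (t : ℕ) (ys : Fin (t + 1) → Y),
      pW μ1 K h ν (fun t' ys' => ψstar t' (Bel μ1 K h ν ψstar t' ys')) t ys ≠ 0 →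
      Bel μ1 K h ν ψstar t ys
        = bW μ1 K h ν (fun t' ys' => ψstar t' (Bel μ1 K h ν ψstar t' ys')) t ys := by
  intro t
  induction t with
  | zero =>
    intro ys _
    rw [bW_zero]
    rfl
  | succ t ih =>
    intro ys hp
    have hys : Fin.snoc (Fin.init ys) (ys (Fin.last (t + 1))) = ys := Fin.snoc_init_self ys
    have hp0 : pW μ1 K h ν (fun t' ys' => ψstar t' (Bel μ1 K h ν ψstar t' ys')) t
        (Fin.init ys) ≠ 0 := by
      intro h0
      apply hp
      rw [← hys]
      exact pW_snoc_zero μ1 K h ν _ _ h0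
    have hBel := ih (Fin.init ys) hp0
    show bayes K h ν t (Bel μ1 K h ν ψstar t (Fin.init ys))
        (ψstar t (Bel μ1 K h ν ψstar t (Fin.init ys))) (ys (Fin.last (t + 1)))
      = bW μ1 K h ν (fun t' ys' => ψstar t' (Bel μ1 K h ν ψstar t' ys')) (t + 1) ys
    conv_rhs => rw [← hys]
    rw [bW_snoc μ1 K h ν _ t (Fin.init ys) _ hp0]
    rw [hBel]


/-- Theorem 2 (dynamic program for partially observed mean-field sharing): (i) the expected
total cost of any observation-feedback strategy is at least `E[V_1(Π_1)]`; (ii) any strategy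
that, at each time and each realizable belief, picks a prescription attaining the minimum in
the dynamic program achieves this bound — so beliefs `Π_t` form an information state and
strategies of the form `Γ_t = ψ_t(Π_t)` entail no loss of optimality. -/
theorem stmt11 (T : ℕ) (μ1 : PMF M) (K : ℕ → M → G → PMF M) (c : ℕ → M → G → ℝ)
    (h : ℕ → M → N → Y) (ν : ℕ → PMF N) :
    (∀ ψ : (t : ℕ) → (Fin (t + 1) → Y) → G,
      (∑ y : Y, (∑ z : M, obsP h ν 0 y z * μ1 z).toReal *
          V T K c h ν 0 (initBel μ1 h ν y))
        ≤ Jpo T μ1 K c h ν ψ) ∧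
    (∀ ψstar : ℕ → (M → ℝ≥0∞) → G,
      (∀ t < T, ∀ ys : Fin (t + 1) → Y,
        0 < (∑ tr ∈ Finset.univ.filter
            (fun tr : Fin (t + 1) → (M × Y) => ∀ s, (tr s).2 = ys s),
            histPO μ1 K h ν
              (fun t' ys' => ψstar t' (Bel μ1 K h ν ψstar t' ys')) t tr) →
        V T K c h ν t (Bel μ1 K h ν ψstar t ys) =
          ctil c t (Bel μ1 K h ν ψstar t ys) (ψstar t (Bel μ1 K h ν ψstar t ys)) +
            ∑ y ∈ Finset.univ.filter
              (fun y => 0 < Pobs K h ν t (Bel μ1 K h ν ψstar t ys)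
                (ψstar t (Bel μ1 K h ν ψstar t ys)) y),
              (Pobs K h ν t (Bel μ1 K h ν ψstar t ys)
                  (ψstar t (Bel μ1 K h ν ψstar t ys)) y).toReal *
                V T K c h ν (t + 1)
                  (bayes K h ν t (Bel μ1 K h ν ψstar t ys)
                    (ψstar t (Bel μ1 K h ν ψstar t ys)) y)) →
      Jpo T μ1 K c h ν (fun t ys => ψstar t (Bel μ1 K h ν ψstar t ys))
        = ∑ y : Y, (∑ z : M, obsP h ν 0 y z * μ1 z).toReal *
            V T K c h ν 0 (initBel μ1 h ν y)) := by
  constructor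
  · intro ψ
    rw [Jpo_eq μ1 K c h ν ψ T, init_sum μ1 K c h ν ψ T]
    exact dp_le μ1 K c h ν ψ T T 0 (by omega)
  · intro ψstar hyp
    rw [Jpo_eq μ1 K c h ν _ T,
      init_sum μ1 K c h ν (fun t ys => ψstar t (Bel μ1 K h ν ψstar t ys)) T]
    refine (dp_eq μ1 K c h ν _ T ?_ T 0 (by omega)).symm
    intro t hlt ys hp
    have hBel := Bel_eq μ1 K h ν ψstar t ys hp
    have hpos : 0 < ∑ tr ∈ Finset.univ.filter
        (fun tr : Fin (t + 1) → (M × Y) => ∀ s, (tr s).2 = ys s),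
        histPO μ1 K h ν (fun t' ys' => ψstar t' (Bel μ1 K h ν ψstar t' ys')) t tr := by
      rw [hist_filter_obs]
      exact pos_iff_ne_zero.mpr hp
    have H := hyp t hlt ys hpos
    rw [hBel] at H
    rw [hBel]
    exact H
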